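/- Let h₃ ≠ 0 and h₂⁰ ∈ ℝ, and set C = arsinh(h₂⁰/h₃), τ(t) = C + |h₃|t, h₁⁰ = −√((h₂⁰)² + h₃²). Define h₁(t) = |h₃|(cosh C − cosh τ) + h₁⁰, h₂(t) = h₃ sinh τ, x(t) = sinh τ − sinh C, y(t) = sgn(h₃)(cosh τ − cosh C), z(t) = (h₃t + sinh(h₃t))/2. Then along this curve, h₁(t) = −√(h₂(t)² + h₃²) for all t, and the curve satisfies ẋ = √(h₂² + h₃²), ẏ = h₂, ż = −(y/2)ẋ + (x/2)h₂ + h₃, with (x,y,z)(0) = (0,0,0). -/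

import Mathlib

theorem abnormal_extremal_second (h3 h20 : ℝ) (hh3 : h3 ≠ 0)
    (C : ℝ) (hC : C = Real.arsinh (h20 / h3))
    (τ : ℝ → ℝ) (hτ : τ = fun t => C + |h3| * t)
    (h10 : ℝ) (hh10 : h10 = -Real.sqrt (h20 ^ 2 + h3 ^ 2))
    (h1 h2 x y z : ℝ → ℝ)
    (hh1 : h1 = fun t => |h3| * (Real.cosh C - Real.cosh (τ t)) + h10)
    (hh2 : h2 = fun t => h3 * Real.sinh (τ t))
    (hx : x = fun t => Real.sinh (τ t) - Real.sinh C)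
    (hy : y = fun t => Real.sign h3 * (Real.cosh (τ t) - Real.cosh C))
    (hz : z = fun t => (h3 * t + Real.sinh (h3 * t)) / 2) :
    (∀ t, h1 t = -Real.sqrt (h2 t ^ 2 + h3 ^ 2)) ∧
    (∀ t, HasDerivAt x (Real.sqrt (h2 t ^ 2 + h3 ^ 2)) t) ∧
    (∀ t, HasDerivAt y (h2 t) t) ∧
    (∀ t, HasDerivAt z
      (-(y t / 2) * Real.sqrt (h2 t ^ 2 + h3 ^ 2) + (x t / 2) * h2 t + h3) t) ∧
    x 0 = 0 ∧ y 0 = 0 ∧ z 0 = 0 := by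
  have hsgn : Real.sign h3 * |h3| = h3 := by
    rcases lt_trichotomy h3 0 with h | h | h
    · rw [Real.sign_of_neg h, abs_of_neg h]; ring
    · exact absurd h hh3
    · rw [Real.sign_of_pos h, abs_of_pos h]; ring
  have hcoshC : |h3| * Real.cosh C = Real.sqrt (h20 ^ 2 + h3 ^ 2) := by
    have hs : Real.sinh C = h20 / h3 := by rw [hC, Real.sinh_arsinh]
    have h : (|h3| * Real.cosh C) ^ 2 = h20 ^ 2 + h3 ^ 2 := by
      rw [mul_pow, sq_abs, Real.cosh_sq, hs]
      field_simp
    rw [← h, Real.sqrt_sq (by positivity)]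
  have hsq : ∀ t, Real.sqrt (h2 t ^ 2 + h3 ^ 2) = |h3| * Real.cosh (τ t) := by
    intro t
    have h : h2 t ^ 2 + h3 ^ 2 = (|h3| * Real.cosh (τ t)) ^ 2 := by
      rw [hh2]; simp only [mul_pow, sq_abs, Real.cosh_sq]; ring
    rw [h, Real.sqrt_sq (by positivity)]
  have hτd : ∀ t, HasDerivAt τ |h3| t := by
    intro t
    rw [hτ]
    simpa using ((hasDerivAt_id t).const_mul |h3|).const_add C
  have hcosh_abs : ∀ t : ℝ, Real.cosh (|h3| * t) = Real.cosh (h3 * t) := by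
    intro t
    rcases abs_choice h3 with h | h <;> rw [h]
    rw [neg_mul, Real.cosh_neg]
  refine ⟨?_, ?_, ?_, ?_, ?_, ?_, ?_⟩
  · intro t
    rw [hsq t, hh1, hh10]
    simp only
    rw [← hcoshC]; ring
  · intro t
    rw [hsq t, hx]
    have := ((Real.hasDerivAt_sinh (τ t)).comp t (hτd t)).sub_const (Real.sinh C)
    simpa [mul_comm] using this
  · intro t
    rw [hh2, hy]
    have hd := (((Real.hasDerivAt_cosh (τ t)).comp t (hτd t)).sub_const
      (Real.cosh C)).const_mul (Real.sign h3)
    refine hd.congr_deriv ?_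
    show _ = h3 * Real.sinh (τ t)
    linear_combination (Real.sinh (τ t)) * hsgn
  · intro t
    have hd : HasDerivAt z ((h3 + Real.cosh (h3 * t) * h3) / 2) t := by
      rw [hz]
      have h1 : HasDerivAt (fun t : ℝ => h3 * t) h3 t := by
        simpa using (hasDerivAt_id t).const_mul h3
      have h2 : HasDerivAt (fun t : ℝ => Real.sinh (h3 * t))
          (Real.cosh (h3 * t) * h3) t := (Real.hasDerivAt_sinh (h3 * t)).comp t h1
      exact (h1.add h2).div_const 2
    convert hd using 1
    rw [hsq t, hx, hy, hh2]
    simp only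
    have key : Real.cosh (h3 * t) =
        Real.cosh (τ t) * Real.cosh C - Real.sinh (τ t) * Real.sinh C := by
      rw [← Real.cosh_sub, ← hcosh_abs t]
      congr 1
      rw [hτ]; ring
    rw [key]
    linear_combination (-(Real.cosh (τ t)) ^ 2 + Real.cosh C * Real.cosh (τ t)) / 2 * hsgn
      - h3 / 2 * Real.cosh_sq_sub_sinh_sq (τ t)
  · rw [hx, hτ]; simp
  · rw [hy, hτ]; simp
  · rw [hz]; simp
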